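/- Let P ⊆ ℝ² be a compact convex set with nonempty interior having exactly k₀ extreme points, where 3 ≤ k₀ < ∞. Suppose P = P₁ ∪ P₂, where P₁ and P₂ are compact convex sets with nonempty interiors, the interiors of P₁ and P₂ are disjoint, and P₁ and P₂ have exactly k₁ and k₂ extreme points respectively (both finite). Then k₁ + k₂ ∈ {k₀ + 2, k₀ + 3, k₀ + 4}. In particular, min{k₁, k₂} ≤ (k₀ + 4)/2, so if k₀ ≥ 5 then min{k₁, k₂} < k₀. -/

import Mathlib

open Set

/-- If a compact convex set `P ⊆ ℝ²` with nonempty interior and exactly `k₀` extreme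
points (`3 ≤ k₀ < ∞`) is split into two compact convex sets `P₁, P₂` with nonempty
interiors, disjoint interiors and exactly `k₁` resp. `k₂` extreme points, then
`k₁ + k₂ ∈ {k₀+2, k₀+3, k₀+4}`; in particular `2·min{k₁,k₂} ≤ k₀ + 4`, so if
`k₀ ≥ 5` then `min{k₁,k₂} < k₀`. -/
lemma half_of_interior {s : Set (ℝ×ℝ)} (hs : Convex ℝ s) {f : (ℝ×ℝ) →L[ℝ] ℝ} {c : ℝ}
    (h : ∀ y ∈ interior s, f y < c) {w} (hw : w ∈ interior s) {x} (hx : x ∈ s) : f x ≤ c := by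
  have hsub : openSegment ℝ x w ⊆ interior s := hs.openSegment_self_interior_subset_interior hx hw
  have hx' : x ∈ closure (openSegment ℝ x w) := by
    rw [closure_openSegment]; exact left_mem_segment ℝ x w
  have hmem : x ∈ closure {y : ℝ×ℝ | f y ≤ c} :=
    closure_mono (fun y hy => (h y (hsub hy)).le) hx'
  have hc : IsClosed {y : ℝ×ℝ | f y ≤ c} := isClosed_le f.continuous continuous_const
  rwa [hc.closure_eq] at hmem

lemma mem_side {P P₁ P₂ : Set (ℝ×ℝ)} {f : (ℝ×ℝ) →L[ℝ] ℝ} {c : ℝ}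
    (hPconv : Convex ℝ P) (hsub₁ : P₁ ⊆ P) (hunion : P = P₁ ∪ P₂)
    (hP₁closed : IsClosed P₁) (h₂ : ∀ y ∈ P₂, c ≤ f y)
    {w} (hw : w ∈ P₁) (hwf : f w < c) {x} (hx : x ∈ P) (hxf : f x ≤ c) : x ∈ P₁ := by
  have hsub : openSegment ℝ x w ⊆ P₁ := by
    rintro z ⟨a, b, ha, hb, hab, rfl⟩
    have hzP : a • x + b • w ∈ P := hPconv hx (hsub₁ hw) ha.le hb.le hab
    have hfz : f (a • x + b • w) < c := by
      have : f (a • x + b • w) = a * f x + b * f w := by simp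
      rw [this]
      have h1 : a * f x ≤ a * c := mul_le_mul_of_nonneg_left hxf ha.le
      have h2 : b * f w < b * c := mul_lt_mul_of_pos_left hwf hb
      have h3 : a * c + b * c = c := by rw [← add_mul, hab, one_mul]
      linarith
    rw [hunion] at hzP
    rcases hzP with h | h
    · exact h
    · exact absurd (h₂ _ h) (not_le.2 hfz)
  have hx' : x ∈ closure (openSegment ℝ x w) := by
    rw [closure_openSegment]; exact left_mem_segment ℝ x w
  have := closure_mono hsub hx'
  rwa [hP₁closed.closure_eq] at this

lemma side_extreme {P P₁ P₂ : Set (ℝ×ℝ)} {f : (ℝ×ℝ) →L[ℝ] ℝ} {c : ℝ}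
    (hPconv : Convex ℝ P) (hsub₁ : P₁ ⊆ P) (hunion : P = P₁ ∪ P₂)
    (hP₁closed : IsClosed P₁) (h₂ : ∀ y ∈ P₂, c ≤ f y)
    {w} (hw : w ∈ P₁) (hwf : f w < c)
    {x} (hx : x ∈ Set.extremePoints ℝ P₁) (hxf : f x < c) :
    x ∈ Set.extremePoints ℝ P := by
  obtain ⟨hxP₁, hext⟩ := hx
  refine ⟨hsub₁ hxP₁, ?_⟩
  intro y hy z hz hseg
  obtain ⟨a, b, ha, hb, hab, hxyz⟩ := hseg
  -- truncation
  have key : ∀ y ∈ P, ∃ t : ℝ, 0 < t ∧ t ≤ 1 ∧ (1-t) • x + t • y ∈ P₁ := by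
    intro y hy
    by_cases hyc : f y ≤ c
    · refine ⟨1, one_pos, le_refl _, ?_⟩
      have : (1-(1:ℝ)) • x + (1:ℝ) • y = y := by module
      rw [this]
      exact mem_side hPconv hsub₁ hunion hP₁closed h₂ hw hwf hy hyc
    · push_neg at hyc
      have hpos : 0 < f y - f x := by linarith
      have htpos : 0 < (c - f x)/(f y - f x) := div_pos (by linarith) hpos
      refine ⟨(c - f x)/(f y - f x), htpos, ?_, ?_⟩
      · rw [div_le_one hpos]; linarith
      · set t := (c - f x)/(f y - f x) with ht
        have ht1 : t ≤ 1 := by rw [ht, div_le_one hpos]; linarith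
        have ht0 : (0:ℝ) ≤ t := le_of_lt htpos
        have hP : (1-t) • x + t • y ∈ P := hPconv (hsub₁ hxP₁) hy (by linarith) ht0 (by ring)
        refine mem_side hPconv hsub₁ hunion hP₁closed h₂ hw hwf hP ?_
        have : f ((1-t) • x + t • y) = (1-t) * f x + t * f y := by simp
        rw [this]
        have : t * (f y - f x) = c - f x := by rw [ht]; field_simp
        nlinarith
  obtain ⟨t₁, ht₁0, ht₁1, hy'⟩ := key y hy
  obtain ⟨t₂, ht₂0, ht₂1, hz'⟩ := key z hz
  obtain rfl : b = 1 - a := by linarith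
  have ht₁ne : t₁ ≠ 0 := ne_of_gt ht₁0
  have ht₂ne : t₂ ≠ 0 := ne_of_gt ht₂0
  have hDpos : 0 < a/t₁ + (1-a)/t₂ := by
    have := div_pos ha ht₁0
    have := div_pos hb ht₂0
    linarith
  have hDne : a/t₁ + (1-a)/t₂ ≠ 0 := ne_of_gt hDpos
  have hmem : x ∈ openSegment ℝ ((1-t₁) • x + t₁ • y) ((1-t₂) • x + t₂ • z) := by
    refine ⟨(a/t₁)/(a/t₁ + (1-a)/t₂), ((1-a)/t₂)/(a/t₁ + (1-a)/t₂),
      div_pos (div_pos ha ht₁0) hDpos, div_pos (div_pos hb ht₂0) hDpos, ?_, ?_⟩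
    · rw [← add_div, div_self hDne]
    · rw [← hxyz]
      match_scalars <;> field_simp <;> ring
  have h1 := hext hy' hz' hmem
  have h2 := hext hz' hy' (by rw [openSegment_symm]; exact hmem)
  refine (?_ : y = x ∧ z = x).1
  constructor
  · have hzero : t₁ • (y - x) = 0 := by linear_combination (norm := module) h1
    rcases smul_eq_zero.1 hzero with h | h
    · exact absurd h ht₁ne
    · exact sub_eq_zero.1 h
  · have hzero : t₂ • (z - x) = 0 := by linear_combination (norm := module) h2
    rcases smul_eq_zero.1 hzero with h | h
    · exact absurd h ht₂ne
    · exact sub_eq_zero.1 h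

lemma cut_extremePoints {S : Set (ℝ×ℝ)} (hS : IsCompact S) (hconv : Convex ℝ S)
    {f : (ℝ×ℝ) →L[ℝ] ℝ} {c : ℝ} (hflat : ∀ x ∈ S, f x = c)
    {v₀ : ℝ×ℝ} (hv₀ : f v₀ ≠ 0)
    {a' b' : ℝ×ℝ} (ha' : a' ∈ S) (hb' : b' ∈ S) (hne : a' ≠ b') :
    ∃ a b : ℝ×ℝ, a ≠ b ∧ Set.extremePoints ℝ S = {a, b} := by
  set p := f (1, 0) with hp
  set q := f (0, 1) with hq
  have hrep : ∀ v : ℝ×ℝ, f v = p * v.1 + q * v.2 := by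
    intro v
    have hv : v = v.1 • ((1:ℝ), (0:ℝ)) + v.2 • ((0:ℝ), (1:ℝ)) := by ext <;> simp
    conv_lhs => rw [hv]
    rw [map_add, map_smul, map_smul, smul_eq_mul, smul_eq_mul, ← hp, ← hq]; ring
  have hpq : 0 < p^2 + q^2 := by
    rcases eq_or_ne p 0 with h0 | h0
    · rcases eq_or_ne q 0 with h1 | h1
      · exfalso; apply hv₀; rw [hrep, h0, h1]; ring
      · positivity
    · positivity
  set g : ℝ×ℝ → ℝ := fun v => -q * v.1 + p * v.2 with hg
  have hgcont : Continuous g := by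
    apply Continuous.add
    · exact continuous_const.mul continuous_fst
    · exact continuous_const.mul continuous_snd
  have hglin : ∀ (α β : ℝ) (y z : ℝ×ℝ), g (α • y + β • z) = α * g y + β * g z := by
    intro α β y z; simp [hg]; ring
  have key : ∀ v w : ℝ×ℝ, f v = c → f w = c → g v = g w → v = w := by
    intro v w hfv hfw hgvw
    rw [hrep] at hfv hfw
    simp only [hg] at hgvw
    have h1 : p * (v.1 - w.1) + q * (v.2 - w.2) = 0 := by linarith
    have h2 : -q * (v.1 - w.1) + p * (v.2 - w.2) = 0 := by linarith
    have e1 : (p^2 + q^2) * (v.1 - w.1) = 0 := by linear_combination p * h1 - q * h2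
    have e2 : (p^2 + q^2) * (v.2 - w.2) = 0 := by linear_combination q * h1 + p * h2
    have f1 : v.1 = w.1 := by
      rcases mul_eq_zero.1 e1 with h | h
      · exact absurd h (ne_of_gt hpq)
      · linarith
    have f2 : v.2 = w.2 := by
      rcases mul_eq_zero.1 e2 with h | h
      · exact absurd h (ne_of_gt hpq)
      · linarith
    exact Prod.ext f1 f2
  have hSne : S.Nonempty := ⟨a', ha'⟩
  obtain ⟨a, haS, hamin⟩ := hS.exists_isMinOn hSne hgcont.continuousOn
  obtain ⟨b, hbS, hbmax⟩ := hS.exists_isMaxOn hSne hgcont.continuousOn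
  have hgab : g a < g b := by
    rcases lt_or_ge (g a) (g b) with h | h
    · exact h
    · exfalso
      have hall : ∀ x ∈ S, x = a := by
        intro x hx
        have h1 : g a ≤ g x := hamin hx
        have h2 : g x ≤ g b := hbmax hx
        exact key x a (hflat x hx) (hflat a haS) (by linarith)
      exact hne ((hall a' ha').trans (hall b' hb').symm)
  have hab : a ≠ b := fun h => absurd (h ▸ hgab) (lt_irrefl _)
  refine ⟨a, b, hab, ?_⟩
  ext x
  simp only [mem_insert_iff, mem_singleton_iff]
  constructor
  · rintro ⟨hxS, hxext⟩
    by_contra hcon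
    push_neg at hcon
    obtain ⟨hxa, hxb⟩ := hcon
    have h1 : g a < g x := lt_of_le_of_ne (hamin hxS)
      (fun h => hxa (key x a (hflat x hxS) (hflat a haS) h.symm))
    have h2 : g x < g b := lt_of_le_of_ne (hbmax hxS)
      (fun h => hxb (key x b (hflat x hxS) (hflat b hbS) h))
    set t := (g x - g a)/(g b - g a) with ht
    have hd : 0 < g b - g a := by linarith
    have ht0 : 0 < t := div_pos (by linarith) hd
    have ht1 : t < 1 := by rw [ht, div_lt_one hd]; linarith
    have hxab : x = (1 - t) • a + t • b := by
      apply key x _ (hflat x hxS)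
      · have hfa := hflat a haS
        have hfb := hflat b hbS
        rw [hrep] at hfa hfb ⊢
        simp only [Prod.fst_add, Prod.snd_add, Prod.smul_fst, Prod.smul_snd, smul_eq_mul]
        linear_combination (1-t) * hfa + t * hfb
      · rw [hglin]
        have hteq : t * (g b - g a) = g x - g a := by rw [ht]; field_simp
        have hres : (1-t) * g a + t * g b = g a + t * (g b - g a) := by ring
        rw [hres, hteq]; ring
    have := hxext haS hbS ⟨1 - t, t, by linarith, ht0, by ring, hxab.symm⟩
    exact hxa this.symm
  · have hext : ∀ v ∈ S, (∀ x ∈ S, g v ≤ g x) → v ∈ Set.extremePoints ℝ S ∨ True := by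
      exact fun v hv _ => Or.inr trivial
    clear hext
    have hmin_ext : ∀ (v : ℝ×ℝ), v ∈ S → ((∀ x ∈ S, g v ≤ g x) ∨ (∀ x ∈ S, g x ≤ g v)) →
        v ∈ Set.extremePoints ℝ S := by
      intro v hv hmono
      refine ⟨hv, ?_⟩
      rintro y hy z hz ⟨α, β, hα, hβ, hs, he⟩
      have hcomb : α * g y + β * g z = g v := by rw [← hglin, he]
      have hsum : α * g v + β * g v = g v := by rw [← add_mul, hs, one_mul]
      have hy' : g y = g v := by
        rcases hmono with hmono | hmono
        · have hgy := hmono y hy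
          have hgz := hmono z hz
          have hz2 : β * g v ≤ β * g z := mul_le_mul_of_nonneg_left hgz hβ.le
          have : α * g y ≤ α * g v := by linarith
          exact le_antisymm (le_of_mul_le_mul_left this hα) hgy
        · have hgy := hmono y hy
          have hgz := hmono z hz
          have hz2 : β * g z ≤ β * g v := mul_le_mul_of_nonneg_left hgz hβ.le
          have : α * g v ≤ α * g y := by linarith
          exact le_antisymm hgy (le_of_mul_le_mul_left this hα)
      have hz' : g z = g v := by
        rcases hmono with hmono | hmono
        · have hgy := hmono y hy
          have hgz := hmono z hz
          have hy2 : α * g v ≤ α * g y := mul_le_mul_of_nonneg_left hgy hα.le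
          have : β * g z ≤ β * g v := by linarith
          exact le_antisymm (le_of_mul_le_mul_left this hβ) hgz
        · have hgy := hmono y hy
          have hgz := hmono z hz
          have hy2 : α * g y ≤ α * g v := mul_le_mul_of_nonneg_left hgy hα.le
          have : β * g v ≤ β * g z := by linarith
          exact le_antisymm hgz (le_of_mul_le_mul_left this hβ)
      exact key y v (hflat y hy) (hflat v hv) hy'
    rintro (rfl | rfl)
    · exact hmin_ext x haS (Or.inl fun y hy => hamin hy)
    · exact hmin_ext x hbS (Or.inr fun y hy => hbmax hy)

lemma frep (f : (ℝ×ℝ) →L[ℝ] ℝ) (v : ℝ×ℝ) : f v = f (1,0) * v.1 + f (0,1) * v.2 := by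
  have hv : v = v.1 • ((1:ℝ), (0:ℝ)) + v.2 • ((0:ℝ), (1:ℝ)) := by ext <;> simp
  conv_lhs => rw [hv]
  rw [map_add, map_smul, map_smul, smul_eq_mul, smul_eq_mul]; ring


theorem glass_cut_vertex_count (P P₁ P₂ : Set (ℝ × ℝ)) (k₀ k₁ k₂ : ℕ)
    (hP : IsCompact P) (hPconv : Convex ℝ P) (hPint : (interior P).Nonempty)
    (hP₁ : IsCompact P₁) (hP₁conv : Convex ℝ P₁) (hP₁int : (interior P₁).Nonempty)
    (hP₂ : IsCompact P₂) (hP₂conv : Convex ℝ P₂) (hP₂int : (interior P₂).Nonempty)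
    (hunion : P = P₁ ∪ P₂) (hdisj : Disjoint (interior P₁) (interior P₂))
    (hfin₀ : (Set.extremePoints ℝ P).Finite) (hfin₁ : (Set.extremePoints ℝ P₁).Finite)
    (hfin₂ : (Set.extremePoints ℝ P₂).Finite)
    (hk₀ : (Set.extremePoints ℝ P).ncard = k₀)
    (hk₁ : (Set.extremePoints ℝ P₁).ncard = k₁)
    (hk₂ : (Set.extremePoints ℝ P₂).ncard = k₂)
    (h3 : 3 ≤ k₀) :
    (k₁ + k₂ = k₀ + 2 ∨ k₁ + k₂ = k₀ + 3 ∨ k₁ + k₂ = k₀ + 4) ∧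
    2 * min k₁ k₂ ≤ k₀ + 4 ∧
    (5 ≤ k₀ → min k₁ k₂ < k₀) := by
  obtain ⟨f, c, h₁, h₂⟩ := geometric_hahn_banach_open_open hP₁conv.interior isOpen_interior
    hP₂conv.interior isOpen_interior hdisj
  obtain ⟨w₁, hw₁⟩ := hP₁int
  obtain ⟨w₂, hw₂⟩ := hP₂int
  have hsub₁ : P₁ ⊆ P := hunion ▸ subset_union_left
  have hsub₂ : P₂ ⊆ P := hunion ▸ subset_union_right
  have hunion' : P = P₂ ∪ P₁ := hunion.trans (union_comm _ _)
  have hw₁P₁ : w₁ ∈ P₁ := interior_subset hw₁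
  have hw₂P₂ : w₂ ∈ P₂ := interior_subset hw₂
  have hfw₁ : f w₁ < c := h₁ w₁ hw₁
  have hfw₂ : c < f w₂ := h₂ w₂ hw₂
  -- the two halves lie in the two half-planes
  have hP₁le : ∀ x ∈ P₁, f x ≤ c := fun x hx => half_of_interior hP₁conv h₁ hw₁ hx
  have hP₂ge : ∀ x ∈ P₂, c ≤ f x := by
    intro x hx
    have h₂' : ∀ y ∈ interior P₂, (-f) y < -c := by
      intro y hy; simp only [ContinuousLinearMap.neg_apply]; linarith [h₂ y hy]
    have := half_of_interior hP₂conv h₂' hw₂ hx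
    simp only [ContinuousLinearMap.neg_apply] at this; linarith
  have h₁neg : ∀ y ∈ P₁, -c ≤ (-f) y := by
    intro y hy; simp only [ContinuousLinearMap.neg_apply]; linarith [hP₁le y hy]
  have h₂neg : ∀ y ∈ P₂, c ≤ f y := hP₂ge
  have hfw₂neg : (-f) w₂ < -c := by
    simp only [ContinuousLinearMap.neg_apply]; linarith
  -- each half is exactly the part of P in the corresponding half-plane
  have hmem₁ : ∀ x ∈ P, f x ≤ c → x ∈ P₁ := fun x hx hxc =>
    mem_side hPconv hsub₁ hunion hP₁.isClosed h₂neg hw₁P₁ hfw₁ hx hxc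
  have hmem₂ : ∀ x ∈ P, c ≤ f x → x ∈ P₂ := fun x hx hxc =>
    mem_side hPconv hsub₂ hunion' hP₂.isClosed h₁neg hw₂P₂ hfw₂neg hx
      (by simp only [ContinuousLinearMap.neg_apply]; linarith)
  -- the cut
  set S : Set (ℝ×ℝ) := P₁ ∩ P₂ with hSdef
  have hflat : ∀ x ∈ S, f x = c := fun x hx =>
    le_antisymm (hP₁le x hx.1) (hP₂ge x hx.2)
  have hScompact : IsCompact S := hP₁.inter_right hP₂.isClosed
  have hSconv : Convex ℝ S := hP₁conv.inter hP₂conv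
  have hSP : ∀ x ∈ P, f x = c → x ∈ S := fun x hx hxc =>
    ⟨hmem₁ x hx hxc.le, hmem₂ x hx hxc.ge⟩
  -- two distinct points on the cut
  have hw₁P : w₁ ∈ interior P := interior_mono hsub₁ hw₁
  have hw₂P : w₂ ∈ interior P := interior_mono hsub₂ hw₂
  obtain ⟨t, htIoo, htc⟩ : ∃ t ∈ Ioo (0:ℝ) 1, f (w₁ + t • (w₂ - w₁)) = c := by
    have hcont : Continuous fun t : ℝ => f (w₁ + t • (w₂ - w₁)) :=
      f.continuous.comp (continuous_const.add (continuous_id.smul continuous_const))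
    have h0 : f (w₁ + (0:ℝ) • (w₂ - w₁)) = f w₁ := by simp
    have h1' : f (w₁ + (1:ℝ) • (w₂ - w₁)) = f w₂ := by simp
    have := intermediate_value_Ioo (zero_le_one (α := ℝ)) hcont.continuousOn
    rw [h0, h1'] at this
    obtain ⟨t, ht, htc⟩ := this ⟨hfw₁, hfw₂⟩
    exact ⟨t, ht, htc⟩
  set w : ℝ×ℝ := w₁ + t • (w₂ - w₁) with hwdef
  have hwint : w ∈ interior P := by
    apply hPconv.add_smul_sub_mem_interior (interior_subset hw₁P) hw₂P
    exact ⟨htIoo.1, htIoo.2.le⟩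
  -- a direction along the cut
  set p := f (1, 0) with hp
  set q := f (0, 1) with hq
  set u : ℝ×ℝ := (-q, p) with hu
  have hfu : f u = 0 := by rw [frep, ← hp, ← hq]; simp [hu]; ring
  have hune : u ≠ 0 := by
    intro h
    have hp0 : q = 0 ∧ p = 0 := by
      constructor
      · have := congrArg Prod.fst h; simpa [hu] using this
      · have := congrArg Prod.snd h; simpa [hu] using this
    have : ∀ v : ℝ×ℝ, f v = 0 := by
      intro v; rw [frep, ← hp, ← hq, hp0.1, hp0.2]; ring
    have e1 := this w₁; have e2 := this w₂; linarith
  obtain ⟨ε, hεpos, hball⟩ := Metric.isOpen_iff.1 isOpen_interior w hwint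
  set s : ℝ := ε / (2 * ‖u‖) with hs
  have hunorm : 0 < ‖u‖ := norm_pos_iff.2 hune
  have hspos : 0 < s := by positivity
  set b' : ℝ×ℝ := w + s • u with hb'
  have hb'ball : b' ∈ Metric.ball w ε := by
    rw [Metric.mem_ball, dist_eq_norm, hb', add_sub_cancel_left, norm_smul,
      Real.norm_eq_abs, abs_of_pos hspos, hs]
    have heq : ε / (2 * ‖u‖) * ‖u‖ = ε / 2 := by
      field_simp
    rw [heq]
    linarith
  have hb'int : b' ∈ interior P := hball hb'ball
  have hfb' : f b' = c := by rw [hb', map_add, map_smul, hfu, smul_zero, add_zero, htc]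
  have hane : w ≠ b' := by
    intro h
    have : s • u = 0 := by
      have := congrArg (fun z => z - w) h
      simpa [hb'] using this.symm
    rcases smul_eq_zero.1 this with h' | h'
    · exact absurd h' (ne_of_gt hspos)
    · exact hune h'
  have haS : w ∈ S := hSP w (interior_subset hwint) htc
  have hbS : b' ∈ S := hSP b' (interior_subset hb'int) hfb'
  -- extreme points of the cut
  have hv₀ : f (w₂ - w₁) ≠ 0 := by rw [map_sub]; intro h; linarith
  obtain ⟨a, b, habne, hSext⟩ :=
    cut_extremePoints hScompact hSconv hflat hv₀ haS hbS hane
  -- S is an extreme subset of both halves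
  have hIsExt₁ : IsExtreme ℝ P₁ S := by
    constructor
    · exact inter_subset_left
    · rintro x₁ hx₁ x₂ hx₂ x hxS ⟨α, β, hα, hβ, hαβ, hsum⟩
      have hfx : f x = c := hflat x hxS
      have hf1 : f x₁ ≤ c := hP₁le x₁ hx₁
      have hf2 : f x₂ ≤ c := hP₁le x₂ hx₂
      have hc : α * f x₁ + β * f x₂ = c := by
        rw [← hfx, ← hsum]; simp
      have hsum2 : α * c + β * c = c := by rw [← add_mul, hαβ, one_mul]
      have hb2 : β * f x₂ ≤ β * c := mul_le_mul_of_nonneg_left hf2 hβ.le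
      have ha2 : α * f x₁ ≤ α * c := mul_le_mul_of_nonneg_left hf1 hα.le
      have he1 : f x₁ = c := le_antisymm hf1
        (le_of_mul_le_mul_left (by linarith : α * c ≤ α * f x₁) hα)
      have he2 : f x₂ = c := le_antisymm hf2
        (le_of_mul_le_mul_left (by linarith : β * c ≤ β * f x₂) hβ)
      exact hSP x₁ (hsub₁ hx₁) he1
  have hIsExt₂ : IsExtreme ℝ P₂ S := by
    constructor
    · exact inter_subset_right
    · rintro x₁ hx₁ x₂ hx₂ x hxS ⟨α, β, hα, hβ, hαβ, hsum⟩
      have hfx : f x = c := hflat x hxS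
      have hf1 : c ≤ f x₁ := hP₂ge x₁ hx₁
      have hf2 : c ≤ f x₂ := hP₂ge x₂ hx₂
      have hc : α * f x₁ + β * f x₂ = c := by
        rw [← hfx, ← hsum]; simp
      have hsum2 : α * c + β * c = c := by rw [← add_mul, hαβ, one_mul]
      have hb2 : β * c ≤ β * f x₂ := mul_le_mul_of_nonneg_left hf2 hβ.le
      have ha2 : α * c ≤ α * f x₁ := mul_le_mul_of_nonneg_left hf1 hα.le
      have he1 : f x₁ = c := le_antisymm
        (le_of_mul_le_mul_left (by linarith : α * f x₁ ≤ α * c) hα) hf1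
      have he2 : f x₂ = c := le_antisymm
        (le_of_mul_le_mul_left (by linarith : β * f x₂ ≤ β * c) hβ) hf2
      exact hSP x₁ (hsub₂ hx₁) he1
  -- characterization of the intersection of extreme point sets
  have hinter : Set.extremePoints ℝ P₁ ∩ Set.extremePoints ℝ P₂ = {a, b} := by
    rw [← hSext]
    apply Subset.antisymm
    · intro x hx
      have hxS : x ∈ S := ⟨hx.1.1, hx.2.1⟩
      exact inter_extremePoints_subset_extremePoints_of_subset inter_subset_left ⟨hxS, hx.1⟩
    · intro x hx
      exact ⟨hIsExt₁.extremePoints_subset_extremePoints hx,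
             hIsExt₂.extremePoints_subset_extremePoints hx⟩
  -- each extreme point of P is extreme in one of the halves
  have hEsub : Set.extremePoints ℝ P ⊆ Set.extremePoints ℝ P₁ ∪ Set.extremePoints ℝ P₂ := by
    intro x hx
    have hxP : x ∈ P := hx.1
    rw [hunion] at hxP
    rcases hxP with h | h
    · exact Or.inl (inter_extremePoints_subset_extremePoints_of_subset hsub₁ ⟨h, hx⟩)
    · exact Or.inr (inter_extremePoints_subset_extremePoints_of_subset hsub₂ ⟨h, hx⟩)
  -- extreme points of the halves lie in E ∪ {a, b}
  have hE₁sub : Set.extremePoints ℝ P₁ ⊆ Set.extremePoints ℝ P ∪ {a, b} := by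
    intro x hx
    rcases lt_or_eq_of_le (hP₁le x hx.1) with h | h
    · exact Or.inl (side_extreme hPconv hsub₁ hunion hP₁.isClosed h₂neg hw₁P₁ hfw₁ hx h)
    · have hxS : x ∈ S := hSP x (hsub₁ hx.1) h
      right
      rw [← hSext]
      exact inter_extremePoints_subset_extremePoints_of_subset inter_subset_left ⟨hxS, hx⟩
  have hE₂sub : Set.extremePoints ℝ P₂ ⊆ Set.extremePoints ℝ P ∪ {a, b} := by
    intro x hx
    rcases lt_or_eq_of_le (hP₂ge x hx.1) with h | h
    · left
      have hfx : (-f) x < -c := by simp only [ContinuousLinearMap.neg_apply]; linarith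
      exact side_extreme hPconv hsub₂ hunion' hP₂.isClosed h₁neg hw₂P₂ hfw₂neg hx hfx
    · have hxS : x ∈ S := hSP x (hsub₂ hx.1) h.symm
      right
      rw [← hSext]
      exact inter_extremePoints_subset_extremePoints_of_subset inter_subset_right ⟨hxS, hx⟩
  -- the union of extreme point sets
  have habmem : ({a, b} : Set (ℝ×ℝ)) ⊆ Set.extremePoints ℝ P₁ ∩ Set.extremePoints ℝ P₂ :=
    hinter ▸ Subset.rfl
  have hUeq : Set.extremePoints ℝ P₁ ∪ Set.extremePoints ℝ P₂
      = Set.extremePoints ℝ P ∪ {a, b} := by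
    apply Subset.antisymm
    · exact union_subset hE₁sub hE₂sub
    · apply union_subset hEsub
      intro x hx
      exact Or.inl (habmem hx).1
  -- counting
  have hcount := Set.ncard_union_add_ncard_inter (Set.extremePoints ℝ P₁)
    (Set.extremePoints ℝ P₂) hfin₁ hfin₂
  rw [hUeq, hinter, hk₁, hk₂] at hcount
  have habcard : ({a, b} : Set (ℝ×ℝ)).ncard = 2 := Set.ncard_pair habne
  have hUle : (Set.extremePoints ℝ P ∪ ({a, b} : Set (ℝ×ℝ))).ncard ≤ k₀ + 2 := by
    calc (Set.extremePoints ℝ P ∪ ({a, b} : Set (ℝ×ℝ))).ncard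
        ≤ (Set.extremePoints ℝ P).ncard + ({a, b} : Set (ℝ×ℝ)).ncard :=
          Set.ncard_union_le _ _
      _ = k₀ + 2 := by rw [hk₀, habcard]
  have hUge : k₀ ≤ (Set.extremePoints ℝ P ∪ ({a, b} : Set (ℝ×ℝ))).ncard := by
    rw [← hk₀]
    exact Set.ncard_le_ncard subset_union_left (hfin₀.union ((Set.finite_singleton b).insert a))
  have hmain : k₁ + k₂ = (Set.extremePoints ℝ P ∪ ({a, b} : Set (ℝ×ℝ))).ncard + 2 := by
    omega
  refine ⟨?_, ?_, ?_⟩ <;> omega
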